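/- Let τ : A^ℤ → A^ℤ be a cellular automaton with a unique active transition p ∈ A^S, where S = [k, ℓ] ⊂ ℤ is an integer interval with k ≤ 0 ≤ ℓ, and let μ : A^S → A be its local defining function. Then τ ∘ τ ≠ τ if and only if either there exists t ∈ S with t > 0 such that p(t) = μ(p) and p(i) = p(i−t) for all i ∈ [k+t, ℓ] with i ≠ t, or there exists t ∈ S with t < 0 such that p(t) = μ(p) and p(i) = p(i−t) for all i ∈ [k, ℓ+t] with i ≠ t. -/

import Mathlib

/-- Key combinatorial lemma: a configuration `y` cannot contain two distinct
occurrences `u < t` of the pattern `P` on `[k,ℓ]` while also satisfying the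
dichotomy coming from `τ y` having pattern `p` at `0`. -/
lemma two_occurrences_false {A : Type*} {k ℓ u t : ℤ} {P y : ℤ → A} {a b : A}
    (hk : k ≤ 0) (hℓ : 0 ≤ ℓ)
    (hku : k ≤ u) (htl : t ≤ ℓ) (hut : u < t)
    (hu : ∀ s, k ≤ s → s ≤ ℓ → y (u + s) = P s)
    (ht : ∀ s, k ≤ s → s ≤ ℓ → y (t + s) = P s)
    (hdi : ∀ i, k ≤ i → i ≤ ℓ → (P i = b ∧ y i = a) ∨ y i = P i)
    (ha : P 0 = a) (hb : b ≠ a) (hpt : P t = b) : False := by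
  classical
  set d := t - u with hddef
  have hd0 : 0 < d := by omega
  have hdlk : d ≤ ℓ - k := by omega
  -- periodicity of P with period d
  have per : ∀ s, k ≤ s → s + d ≤ ℓ → P (s + d) = P s := by
    intro s h1 h2
    have e1 : y (u + (s + d)) = P (s + d) := hu _ (by omega) (by omega)
    have e2 : y (t + s) = P s := ht _ (by omega) (by omega)
    have e3 : u + (s + d) = t + s := by omega
    rw [e3, e2] at e1
    exact e1.symm
  have aux : ∀ (n : ℕ) (z : ℤ), k ≤ z → z + d * (n : ℤ) ≤ ℓ → P (z + d * (n : ℤ)) = P z := by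
    intro n
    induction n with
    | zero => intro z _ _; simp
    | succ m ih =>
      intro z h1 h2
      have hdm : (0:ℤ) ≤ d * (m:ℤ) := mul_nonneg hd0.le (by positivity)
      have hcast : (((m:ℕ)+1 : ℕ) : ℤ) = (m:ℤ) + 1 := by push_cast; ring
      have e0 : z + d * (((m:ℕ)+1 : ℕ) : ℤ) = (z + d) + d * (m:ℤ) := by rw [hcast]; ring
      have h2' : (z + d) + d * (m:ℤ) ≤ ℓ := by rw [← e0]; exact h2
      rw [e0, ih (z + d) (by omega) h2']
      exact per z h1 (by omega)
  -- the residue-class value function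
  set V : ℤ → A := fun c => P (k + (c - k) % d) with hVdef
  have hrnn : ∀ c : ℤ, 0 ≤ (c - k) % d := fun c => Int.emod_nonneg _ (by omega)
  have hrlt : ∀ c : ℤ, (c - k) % d < d := fun c => Int.emod_lt_of_pos _ hd0
  have VP : ∀ s, k ≤ s → s ≤ ℓ → V s = P s := by
    intro s h1 h2
    have h6 : 0 ≤ (s - k) / d := Int.ediv_nonneg (by omega) hd0.le
    obtain ⟨n, hn⟩ : ∃ n : ℕ, (s - k) / d = (n : ℤ) :=
      ⟨((s - k) / d).toNat, (Int.toNat_of_nonneg h6).symm⟩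
    have h5 := Int.mul_ediv_add_emod (s - k) d
    have he : (k + (s - k) % d) + d * (n : ℤ) = s := by
      rw [← hn]; linarith [h5]
    have := aux n (k + (s - k) % d) (by linarith [hrnn s]) (by rw [he]; exact h2)
    rw [he] at this
    exact (this.symm)
  have Vcong : ∀ c m : ℤ, V (c + d * m) = V c := by
    intro c m
    show P (k + (c + d * m - k) % d) = P (k + (c - k) % d)
    have e : c + d * m - k = (c - k) + d * m := by ring
    rw [e, Int.add_mul_emod_self_left]
  have Vt : V t = b := by rw [VP t (by omega) htl]; exact hpt
  have V0 : V 0 = a := by rw [VP 0 hk hℓ]; exact ha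
  -- the dichotomy transported to residues
  have dich : ∀ c : ℤ, (V c = b ∧ V (c - t) = a) ∨ V c = V (c - t) := by
    intro c
    set q := (c - u) / d with hqdef
    set r := (c - u) % d with hrdef
    have hr0 : 0 ≤ r := Int.emod_nonneg _ (by omega)
    have hrd : r < d := Int.emod_lt_of_pos _ hd0
    have hqr := Int.mul_ediv_add_emod (c - u) d
    set i := u + r with hidef
    have hik : k ≤ i := by omega
    have hil : i ≤ ℓ := by omega
    have hci : i = c + d * (-q) := by
      have : c - u = d * q + r := hqr.symm
      linarith
    have h1 : V i = V c := by rw [hci, Vcong]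
    have h2 : V (i - t) = V (c - t) := by
      have e : i - t = (c - t) + d * (-q) := by rw [hci]; ring
      rw [e, Vcong]
    have hyi : y i = V (i - t) := by
      by_cases hcase : i - u ≤ ℓ
      · have e := hu (i - u) (by omega) hcase
        rw [show u + (i - u) = i by ring] at e
        have e2 : V (i - t) = V (i - u) := by
          have e3 : i - u = (i - t) + d * 1 := by rw [hddef]; ring
          rw [e3, Vcong]
        rw [e2, VP _ (by omega) hcase]
        exact e
      · have hit1 : k ≤ i - t := by omega
        have hit2 : i - t ≤ ℓ := by omega
        have e := ht (i - t) hit1 hit2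
        rw [show t + (i - t) = i by ring] at e
        rw [VP _ hit1 hit2]
        exact e
    rcases hdi i hik hil with ⟨hP, hy⟩ | hy
    · left
      constructor
      · rw [← h1, VP i hik hil]; exact hP
      · rw [← h2, ← hyi]; exact hy
    · right
      rw [← h1, ← h2, VP i hik hil, ← hy, hyi]
  -- counting argument
  set D := Finset.Icc (0:ℤ) (d - 1) with hDdef
  set s1 := D.filter (fun c => V c = b) with hs1def
  set s2 := D.filter (fun c => V (c - t) = b) with hs2def
  have hsub : s2 ⊆ s1 := by
    intro c hc
    rw [hs2def, Finset.mem_filter] at hc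
    rw [hs1def, Finset.mem_filter]
    refine ⟨hc.1, ?_⟩
    rcases dich c with ⟨h1', h2'⟩ | h'
    · exact h1'
    · rw [h', hc.2]
  set c₀ := t % d with hc0def
  have hc₀D : c₀ ∈ D := by
    rw [hDdef, Finset.mem_Icc]
    constructor
    · exact Int.emod_nonneg _ (by omega)
    · have := Int.emod_lt_of_pos t hd0; omega
  have hc₀eq : c₀ = t + d * (-(t / d)) := by
    have := Int.mul_ediv_add_emod t d
    rw [hc0def]; linarith
  have hc₀1 : V c₀ = b := by rw [hc₀eq, Vcong, Vt]
  have hc₀2 : V (c₀ - t) = a := by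
    have e : c₀ - t = 0 + d * (-(t / d)) := by rw [hc₀eq]; ring
    rw [e, Vcong, V0]
  have hc₀s1 : c₀ ∈ s1 := by rw [hs1def, Finset.mem_filter]; exact ⟨hc₀D, hc₀1⟩
  have hc₀ns2 : c₀ ∉ s2 := by
    rw [hs2def, Finset.mem_filter]
    rintro ⟨-, h⟩
    rw [hc₀2] at h
    exact hb h.symm
  have hcard1 : s2.card < s1.card :=
    Finset.card_lt_card ((Finset.ssubset_iff_of_subset hsub).mpr ⟨c₀, hc₀s1, hc₀ns2⟩)
  have hcard2 : s1.card ≤ s2.card := by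
    apply Finset.card_le_card_of_injOn (fun c => (c + t) % d)
    · intro c hc
      simp only [Finset.mem_coe, hs1def, Finset.mem_filter] at hc
      rw [Finset.mem_coe, hs2def, Finset.mem_filter]
      beta_reduce
      constructor
      · rw [hDdef, Finset.mem_Icc]
        constructor
        · exact Int.emod_nonneg _ (by omega)
        · have := Int.emod_lt_of_pos (c + t) hd0; omega
      · have e : (c + t) % d - t = c + d * (-((c + t) / d)) := by
          have := Int.mul_ediv_add_emod (c + t) d
          linarith
        rw [e, Vcong]
        exact hc.2
    · intro c hc c' hc' he
      simp only [hs1def, Finset.mem_coe, Finset.mem_filter, hDdef, Finset.mem_Icc] at hc hc'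
      have e1 := Int.mul_ediv_add_emod (c + t) d
      have e2 := Int.mul_ediv_add_emod (c' + t) d
      have hcc' : c - c' = d * ((c + t) / d - (c' + t) / d) := by
        have : (c + t) % d = (c' + t) % d := he
        nlinarith [e1, e2]
      set m := (c + t) / d - (c' + t) / d with hmdef
      have hm0 : m = 0 := by
        by_contra hm
        rcases lt_or_gt_of_ne hm with h | h
        · have : d * m ≤ d * (-1) := by
            apply mul_le_mul_of_nonneg_left _ hd0.le
            omega
          omega
        · have : d * 1 ≤ d * m := by
            apply mul_le_mul_of_nonneg_left _ hd0.le
            omega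
          omega
      rw [hm0, mul_zero] at hcc'
      omega
  omega

/-- Construction lemma: a witness `t` with `p t = μ p` and translational
symmetry yields non-idempotence. -/
lemma witness_build {A : Type*} {k ℓ : ℤ} (hk : k ≤ 0) (hℓ : 0 ≤ ℓ)
    (h0 : (0:ℤ) ∈ Finset.Icc k ℓ)
    (p : ↥(Finset.Icc k ℓ) → A) (μ : (↥(Finset.Icc k ℓ) → A) → A)
    (hμ : ∀ z : ↥(Finset.Icc k ℓ) → A, μ z = z ⟨0, h0⟩ ↔ z ≠ p)
    (τ : (ℤ → A) → ℤ → A)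
    (hτ : ∀ (x : ℤ → A) (j : ℤ), τ x j = μ (fun s : ↥(Finset.Icc k ℓ) => x (s.1 + j)))
    (t : ℤ) (htm : t ∈ Finset.Icc k ℓ) (ht0 : t ≠ 0)
    (hpb : p ⟨t, htm⟩ = μ p)
    (hsym : ∀ i (hi : i ∈ Finset.Icc k ℓ) (hi' : i - t ∈ Finset.Icc k ℓ), i ≠ t →
      p ⟨i, hi⟩ = p ⟨i - t, hi'⟩) :
    τ ∘ τ ≠ τ := by
  classical
  set a := p ⟨0, h0⟩ with hadef
  set b := μ p with hbdef
  have hba : b ≠ a := fun h => (hμ p).mp h rfl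
  set x : ℤ → A := fun m =>
    if hm : m ∈ Finset.Icc k ℓ then (if m = t then a else p ⟨m, hm⟩)
    else if hm' : m - t ∈ Finset.Icc k ℓ then p ⟨m - t, hm'⟩ else a with hxdef
  have C2 : ∀ i (hi : i ∈ Finset.Icc k ℓ), i ≠ t → x i = p ⟨i, hi⟩ := by
    intro i hi hit
    show (if hm : i ∈ Finset.Icc k ℓ then (if i = t then a else p ⟨i, hm⟩)
      else if hm' : i - t ∈ Finset.Icc k ℓ then p ⟨i - t, hm'⟩ else a) = p ⟨i, hi⟩
    rw [dif_pos hi, if_neg hit]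
  have hxt : x t = a := by
    show (if hm : t ∈ Finset.Icc k ℓ then (if t = t then a else p ⟨t, hm⟩)
      else if hm' : t - t ∈ Finset.Icc k ℓ then p ⟨t - t, hm'⟩ else a) = a
    rw [dif_pos htm, if_pos rfl]
  have C1 : ∀ s (hs : s ∈ Finset.Icc k ℓ), x (t + s) = p ⟨s, hs⟩ := by
    intro s hs
    by_cases hm : t + s ∈ Finset.Icc k ℓ
    · by_cases hts : t + s = t
      · have hs0 : s = 0 := by omega
        subst hs0
        rw [add_zero, hxt]
      · have hs' : (t + s) - t ∈ Finset.Icc k ℓ := by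
          rw [show t + s - t = s by ring]; exact hs
        rw [C2 _ hm hts, hsym (t + s) hm hs' hts]
        exact congrArg p (Subtype.ext (by ring))
    · have hm' : (t + s) - t ∈ Finset.Icc k ℓ := by
        rw [show t + s - t = s by ring]; exact hs
      show (if hmm : t + s ∈ Finset.Icc k ℓ then (if t + s = t then a else p ⟨t + s, hmm⟩)
        else if hmm' : t + s - t ∈ Finset.Icc k ℓ then p ⟨t + s - t, hmm'⟩ else a) = p ⟨s, hs⟩
      rw [dif_neg hm, dif_pos hm']
      exact congrArg p (Subtype.ext (by ring))
  have C4 : ∀ j (hj : j ∈ Finset.Icc k ℓ), j ≠ t →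
      (fun s : ↥(Finset.Icc k ℓ) => x (s.1 + j)) ≠ p := by
    intro j hj hjt hocc
    have h1 : x ((0:ℤ) + j) = p ⟨0, h0⟩ := congrFun hocc ⟨0, h0⟩
    have h2 : x (t + j) = p ⟨t, htm⟩ := congrFun hocc ⟨t, htm⟩
    have h3 : x (t + j) = p ⟨j, hj⟩ := C1 j hj
    have h4 : x j = p ⟨j, hj⟩ := C2 j hj hjt
    rw [zero_add, h4] at h1
    apply hba
    calc b = p ⟨t, htm⟩ := hpb.symm
    _ = p ⟨j, hj⟩ := by rw [← h2, h3]
    _ = a := h1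
  have C5 : (fun s : ↥(Finset.Icc k ℓ) => τ x (s.1 + 0)) = p := by
    funext s
    obtain ⟨i, hi⟩ := s
    show τ x (i + 0) = p ⟨i, hi⟩
    rw [add_zero, hτ]
    by_cases hit : i = t
    · subst hit
      have hp : (fun s : ↥(Finset.Icc k ℓ) => x (s.1 + i)) = p := by
        funext s'
        show x (s'.1 + i) = p s'
        rw [add_comm]
        exact C1 s'.1 s'.2
      rw [hp]
      exact hpb.symm
    · rw [(hμ _).mpr (C4 i hi hit)]
      show x ((0:ℤ) + i) = p ⟨i, hi⟩
      rw [zero_add]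
      exact C2 i hi hit
  intro heq
  have h1 : τ x 0 = a := by
    rw [hτ, (hμ _).mpr (C4 0 h0 (fun h => ht0 h.symm))]
    show x ((0:ℤ) + 0) = a
    rw [add_zero]
    exact C2 0 h0 (fun h => ht0 h.symm)
  have h2 : τ (τ x) 0 = b := by
    rw [hτ]
    rw [C5]
  have h3 : (τ ∘ τ) x 0 = τ x 0 := by rw [heq]
  rw [Function.comp_apply, h2, h1] at h3
  exact hba h3

theorem not_idempotent_iff_translational_symmetry
    {A : Type*} [Nontrivial A]
    (k ℓ : ℤ) (hk : k ≤ 0) (hℓ : 0 ≤ ℓ)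
    (S : Finset ℤ) (hS : S = Finset.Icc k ℓ) (h0 : (0 : ℤ) ∈ S)
    (p : S → A) (μ : (S → A) → A)
    (hμ : ∀ z : S → A, μ z = z ⟨0, h0⟩ ↔ z ≠ p)
    (τ : (ℤ → A) → ℤ → A)
    (hτ : ∀ (x : ℤ → A) (j : ℤ), τ x j = μ (fun s : S => x (s.1 + j))) :
    τ ∘ τ ≠ τ ↔
      ((∃ t, ∃ ht : t ∈ S, 0 < t ∧ p ⟨t, ht⟩ = μ p ∧
          ∀ i, k + t ≤ i → i ≤ ℓ → i ≠ t →
            ∀ (hi : i ∈ S) (hi' : i - t ∈ S), p ⟨i, hi⟩ = p ⟨i - t, hi'⟩) ∨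
       (∃ t, ∃ ht : t ∈ S, t < 0 ∧ p ⟨t, ht⟩ = μ p ∧
          ∀ i, k ≤ i → i ≤ ℓ + t → i ≠ t →
            ∀ (hi : i ∈ S) (hi' : i - t ∈ S), p ⟨i, hi⟩ = p ⟨i - t, hi'⟩)) := by
  classical
  subst hS
  have hmem : ∀ i : ℤ, i ∈ Finset.Icc k ℓ ↔ k ≤ i ∧ i ≤ ℓ := fun i => Finset.mem_Icc
  set a := p ⟨0, h0⟩ with hadef
  set b := μ p with hbdef
  have hba : b ≠ a := fun h => (hμ p).mp h rfl
  constructor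
  · -- hard direction
    intro hne
    obtain ⟨x, c, hxc⟩ : ∃ x c, τ (τ x) c ≠ τ x c := by
      by_contra h'
      push_neg at h'
      exact hne (funext fun x => funext fun c => (by
        show τ (τ x) c = τ x c
        exact h' x c))
    set y : ℤ → A := fun m => x (m + c) with hydef
    have hτy : ∀ m, τ y m = τ x (m + c) := by
      intro m
      rw [hτ, hτ]
      congr 1
      funext s
      show x (s.1 + m + c) = x (s.1 + (m + c))
      rw [add_assoc]
    have hne0 : τ (τ y) 0 ≠ τ y 0 := by
      have e1 : τ (τ y) 0 = τ (τ x) c := by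
        rw [hτ, hτ]
        congr 1
        funext s
        rw [hτy]
        norm_num
      have e2 : τ y 0 = τ x c := by rw [hτy, zero_add]
      rw [e1, e2]
      exact hxc
    -- define P
    set P : ℤ → A := fun i => if h : i ∈ Finset.Icc k ℓ then p ⟨i, h⟩ else a with hPdef
    have hPp : ∀ i (hi : i ∈ Finset.Icc k ℓ), P i = p ⟨i, hi⟩ := by
      intro i hi
      show (if h : i ∈ Finset.Icc k ℓ then p ⟨i, h⟩ else a) = p ⟨i, hi⟩
      rw [dif_pos hi]
    have hP0 : P 0 = a := hPp 0 h0
    -- occurrence predicate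
    set Occ : ℤ → Prop := fun j => ∀ s, k ≤ s → s ≤ ℓ → y (j + s) = P s with hOdef
    have occ_iff : ∀ j : ℤ, (fun s : ↥(Finset.Icc k ℓ) => y (s.1 + j)) = p ↔ Occ j := by
      intro j
      constructor
      · intro h s hs1 hs2
        have hsm : s ∈ Finset.Icc k ℓ := (hmem s).mpr ⟨hs1, hs2⟩
        have := congrFun h ⟨s, hsm⟩
        show y (j + s) = P s
        rw [add_comm, hPp s hsm]
        exact this
      · intro h
        funext s
        obtain ⟨i, hi⟩ := s
        show y (i + j) = p ⟨i, hi⟩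
        rw [add_comm, ← hPp i hi]
        exact h i ((hmem i).mp hi).1 ((hmem i).mp hi).2
    -- case analysis
    by_cases h1 : (fun s : ↥(Finset.Icc k ℓ) => y (s.1 + 0)) = p
    · exfalso
      apply hne0
      by_cases h2 : (fun s : ↥(Finset.Icc k ℓ) => τ y (s.1 + 0)) = p
      · rw [hτ (τ y) 0, hτ y 0, h1, h2]
      · rw [hτ (τ y) 0, (hμ _).mpr h2]
        show τ y ((0:ℤ) + 0) = τ y 0
        rw [zero_add]
    · by_cases h2 : (fun s : ↥(Finset.Icc k ℓ) => τ y (s.1 + 0)) = p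
      · -- the real case
        have himg : ∀ i (hi : i ∈ Finset.Icc k ℓ), τ y i = p ⟨i, hi⟩ := by
          intro i hi
          have := congrFun h2 ⟨i, hi⟩
          simpa using this
        -- the key dichotomy
        have KD : ∀ i, k ≤ i → i ≤ ℓ →
            (Occ i ∧ P i = b ∧ y i = a) ∨ (¬ Occ i ∧ y i = P i) := by
          intro i hi1 hi2
          have hi : i ∈ Finset.Icc k ℓ := (hmem i).mpr ⟨hi1, hi2⟩
          have hτyi : τ y i = μ (fun s : ↥(Finset.Icc k ℓ) => y (s.1 + i)) := hτ y i
          by_cases hocc : (fun s : ↥(Finset.Icc k ℓ) => y (s.1 + i)) = p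
          · left
            refine ⟨(occ_iff i).mp hocc, ?_, ?_⟩
            · rw [hPp i hi, ← himg i hi, hτyi, hocc]
            · have := congrFun hocc ⟨0, h0⟩
              show y i = a
              rw [← zero_add i]
              exact this
          · right
            refine ⟨fun hO => hocc ((occ_iff i).mpr hO), ?_⟩
            rw [hPp i hi, ← himg i hi, hτyi, (hμ _).mpr hocc]
            show y i = y ((0:ℤ) + i)
            rw [zero_add]
        -- existence of an occurrence
        obtain ⟨t, htm, hne_t⟩ : ∃ i, ∃ hi : i ∈ Finset.Icc k ℓ, y (i + 0) ≠ p ⟨i, hi⟩ := by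
          by_contra hc
          push_neg at hc
          exact h1 (funext fun s => hc s.1 s.2)
    
        have ht1 : k ≤ t := ((hmem t).mp htm).1
        have ht2 : t ≤ ℓ := ((hmem t).mp htm).2
        have hyt : y t ≠ P t := by
          rw [hPp t htm]
          rw [add_zero] at hne_t
          exact hne_t
        have hKDt := KD t ht1 ht2
        have hOcc_t : Occ t ∧ P t = b ∧ y t = a := by
          rcases hKDt with h | ⟨-, h⟩
          · exact h
          · exact absurd h hyt
        obtain ⟨hOt, hPtb, hyta⟩ := hOcc_t
        have ht0 : t ≠ 0 := by
          intro h
          subst h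
          exact h1 ((occ_iff 0).mpr hOt)
        -- uniqueness of occurrence
        have huniq : ∀ j, k ≤ j → j ≤ ℓ → j ≠ t → ¬ Occ j := by
          intro j hj1 hj2 hjt hOj
          have hdij : ∀ i, k ≤ i → i ≤ ℓ → (P i = b ∧ y i = a) ∨ y i = P i := by
            intro i hi1 hi2
            rcases KD i hi1 hi2 with ⟨-, h⟩ | ⟨-, h⟩
            · exact Or.inl h
            · exact Or.inr h
          rcases lt_or_gt_of_ne hjt with h | h
          · exact two_occurrences_false hk hℓ hj1 ht2 h hOj hOt hdij hP0 hba hPtb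
          · have hPjb : P j = b := by
              rcases KD j hj1 hj2 with ⟨-, h', -⟩ | ⟨hno, -⟩
              · exact h'
              · exact absurd hOj hno
            exact two_occurrences_false hk hℓ ht1 hj2 h hOt hOj hdij hP0 hba hPjb
        -- now produce the RHS witness
        have hsymall : ∀ i (hi : i ∈ Finset.Icc k ℓ) (hi' : i - t ∈ Finset.Icc k ℓ), i ≠ t →
            p ⟨i, hi⟩ = p ⟨i - t, hi'⟩ := by
          intro i hi hi' hit
          have hi1 := ((hmem i).mp hi).1
          have hi2 := ((hmem i).mp hi).2
          have hyi : y i = P i := by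
            rcases KD i hi1 hi2 with ⟨hO, -, -⟩ | ⟨-, h⟩
            · exact absurd hO (huniq i hi1 hi2 hit)
            · exact h
          have hocc := hOt (i - t) ((hmem _).mp hi').1 ((hmem _).mp hi').2
          rw [show t + (i - t) = i by ring] at hocc
          rw [← hPp i hi, ← hPp (i - t) hi', ← hocc, hyi]
        have hptμ : p ⟨t, htm⟩ = μ p := by rw [← hPp t htm, hPtb]
        rcases lt_or_gt_of_ne ht0 with htneg | htpos
        · right
          refine ⟨t, htm, htneg, hptμ, ?_⟩
          intro i hi1 hi2 hit hi hi'
          exact hsymall i hi hi' hit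
        · left
          refine ⟨t, htm, htpos, hptμ, ?_⟩
          intro i hi1 hi2 hit hi hi'
          exact hsymall i hi hi' hit
      · -- both patterns differ from p : contradiction with hne0
        exfalso
        apply hne0
        rw [hτ (τ y) 0, (hμ _).mpr h2]
        show τ y ((0:ℤ) + 0) = τ y 0
        rw [zero_add]
  · -- easy direction: build the witness configuration
    rintro (⟨t, htm, htpos, hpb, hsym⟩ | ⟨t, htm, htneg, hpb, hsym⟩)
    · apply witness_build hk hℓ h0 p μ hμ τ hτ t htm (by omega) hpb
      intro i hi hi' hit
      have h1 := (hmem i).mp hi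
      have h2 := (hmem _).mp hi'
      exact hsym i (by omega) (by omega) hit hi hi'
    · apply witness_build hk hℓ h0 p μ hμ τ hτ t htm (by omega) hpb
      intro i hi hi' hit
      have h1 := (hmem i).mp hi
      have h2 := (hmem _).mp hi'
      exact hsym i (by omega) (by omega) hit hi hi'
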